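/- Let g : ℝⁿ → ℝᵐ be continuously differentiable, and suppose for every z in the box [x, x̂] the Jacobian satisfies J̲ ≤ Dg(z) ≤ J̄ entrywise. Then for every z ∈ [x, x̂]: g(x) + [J̲]⁻(x̂ − x) ≤ g(z) ≤ g(x) + [J̄]⁺(x̂ − x), where [B]⁺ = max(B, 0) and [B]⁻ = min(B, 0) entrywise. In particular, the function G(x, x̂) = ([J̲]⁻(x̂ − x) + g(x), [J̄]⁺(x̂ − x) + g(x)) is an inclusion function for g on [x, x̂]. -/

import Mathlib

/-- Entrywise nonnegative part of a matrix. -/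
def mpos {m n : ℕ} (A : Matrix (Fin m) (Fin n) ℝ) : Matrix (Fin m) (Fin n) ℝ :=
  fun i j => max (A i j) 0

/-- Entrywise nonpositive part of a matrix. -/
def mneg {m n : ℕ} (A : Matrix (Fin m) (Fin n) ℝ) : Matrix (Fin m) (Fin n) ℝ :=
  fun i j => min (A i j) 0

lemma deriv_bound_aux {φ φ' : ℝ → ℝ} {C : ℝ}
    (hφ : ∀ t, HasDerivAt φ (φ' t) t)
    (hC : ∀ t ∈ Set.Icc (0:ℝ) 1, φ' t ≤ C) : φ 1 ≤ φ 0 + C := by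
  have hφd : Differentiable ℝ φ := fun t => (hφ t).differentiableAt
  have hψ : ∀ t : ℝ, HasDerivAt (fun t => C * t - φ t) (C - φ' t) t := by
    intro t
    have := ((hasDerivAt_id t).const_mul C).sub (hφ t)
    exact this.congr_deriv (by simp)
  have h : MonotoneOn (fun t => C * t - φ t) (Set.Icc (0:ℝ) 1) := by
    apply monotoneOn_of_deriv_nonneg (convex_Icc 0 1)
    · exact ((continuous_const.mul continuous_id).sub hφd.continuous).continuousOn
    · exact fun t _ => ((hψ t).differentiableAt).differentiableWithinAt
    · intro t ht
      rw [interior_Icc] at ht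
      rw [(hψ t).deriv]
      have := hC t ⟨le_of_lt ht.1, le_of_lt ht.2⟩
      linarith
  have := h (Set.left_mem_Icc.2 zero_le_one) (Set.right_mem_Icc.2 zero_le_one) zero_le_one
  simp only at this
  linarith

lemma deriv_bound_aux' {φ φ' : ℝ → ℝ} {C : ℝ}
    (hφ : ∀ t, HasDerivAt φ (φ' t) t)
    (hC : ∀ t ∈ Set.Icc (0:ℝ) 1, C ≤ φ' t) : φ 0 + C ≤ φ 1 := by
  have := deriv_bound_aux (φ := fun t => -φ t) (φ' := fun t => -φ' t) (C := -C)
    (fun t => (hφ t).neg) (fun t ht => by show -φ' t ≤ -C; linarith [hC t ht])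
  linarith

/-- Jacobian-based cornered inclusion function: if `g` is continuously
differentiable and its Jacobian on the box `[x, xu]` satisfies the entrywise bounds
`Jlo ≤ Dg(z) ≤ Jhi`, then for every `z ∈ [x, xu]`,
`g(x) + [Jlo]⁻(xu − x) ≤ g(z) ≤ g(x) + [Jhi]⁺(xu − x)`. -/
theorem stmt1 {n m : ℕ} (g : (Fin n → ℝ) → (Fin m → ℝ)) (hg : ContDiff ℝ 1 g)
    (x xu : Fin n → ℝ) (hx : x ≤ xu)
    (Jlo Jhi : Matrix (Fin m) (Fin n) ℝ)
    (hJ : ∀ z ∈ Set.Icc x xu, ∀ i j,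
      Jlo i j ≤ fderiv ℝ g z (Pi.single j 1) i ∧ fderiv ℝ g z (Pi.single j 1) i ≤ Jhi i j) :
    ∀ z ∈ Set.Icc x xu,
      g x + (mneg Jlo).mulVec (xu - x) ≤ g z ∧
      g z ≤ g x + (mpos Jhi).mulVec (xu - x) := by
  intro z hz
  have hgd : Differentiable ℝ g := hg.differentiable one_ne_zero
  set v : Fin n → ℝ := z - x with hv
  have hv0 : ∀ j, 0 ≤ v j := fun j => sub_nonneg.2 (hz.1 j)
  have hvle : ∀ j, v j ≤ xu j - x j := fun j => sub_le_sub_right (hz.2 j) _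
  -- path membership
  have hpath : ∀ t ∈ Set.Icc (0:ℝ) 1, x + t • v ∈ Set.Icc x xu := by
    intro t ht
    constructor <;> intro k
    · have : 0 ≤ t * v k := mul_nonneg ht.1 (hv0 k)
      simp only [Pi.add_apply, Pi.smul_apply, smul_eq_mul]
      linarith
    · have h1 : t * v k ≤ 1 * v k := mul_le_mul_of_nonneg_right ht.2 (hv0 k)
      have h2 := hvle k
      simp only [Pi.add_apply, Pi.smul_apply, smul_eq_mul]
      linarith
  -- derivative of each coordinate along the path
  have hder : ∀ (i : Fin m) (t : ℝ),
      HasDerivAt (fun t => g (x + t • v) i) (fderiv ℝ g (x + t • v) v i) t := by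
    intro i t
    have hpathd : HasDerivAt (fun t : ℝ => x + t • v) v t := by
      have := ((hasDerivAt_id t).smul_const v).const_add x
      simpa using this
    have hcomp : HasDerivAt (fun t : ℝ => g (x + t • v)) (fderiv ℝ g (x + t • v) v) t :=
      (hgd (x + t • v)).hasFDerivAt.comp_hasDerivAt t hpathd
    exact (hasDerivAt_pi.1 hcomp) i
  -- expand fderiv applied to v as a sum
  have hsum : ∀ (p : Fin n → ℝ) (i : Fin m),
      fderiv ℝ g p v i = ∑ j, v j * fderiv ℝ g p (Pi.single j 1) i := by
    intro p i
    have hrep : v = ∑ j, v j • (Pi.single j (1:ℝ) : Fin n → ℝ) := by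
      ext k
      simp [Pi.single_apply, Finset.sum_apply]
    calc fderiv ℝ g p v i = (∑ j, v j • fderiv ℝ g p (Pi.single j 1)) i := by
          conv_lhs => rw [hrep]
          simp [map_sum, map_smul]
      _ = ∑ j, v j * fderiv ℝ g p (Pi.single j 1) i := by
          simp [Finset.sum_apply]
  constructor <;> intro i
  · -- lower bound
    have hb : ∀ t ∈ Set.Icc (0:ℝ) 1,
        (mneg Jlo).mulVec (xu - x) i ≤ fderiv ℝ g (x + t • v) v i := by
      intro t ht
      rw [hsum]
      unfold Matrix.mulVec dotProduct mneg
      apply Finset.sum_le_sum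
      intro j _
      have hJj := (hJ _ (hpath t ht) i j).1
      have h1 : min (Jlo i j) 0 * (xu j - x j) ≤ min (Jlo i j) 0 * v j :=
        mul_le_mul_of_nonpos_left (hvle j) (min_le_right _ _)
      have h2 : min (Jlo i j) 0 * v j ≤ Jlo i j * v j :=
        mul_le_mul_of_nonneg_right (min_le_left _ _) (hv0 j)
      have h3 : Jlo i j * v j ≤ fderiv ℝ g (x + t • v) (Pi.single j 1) i * v j :=
        mul_le_mul_of_nonneg_right hJj (hv0 j)
      calc min (Jlo i j) 0 * (xu - x) j = min (Jlo i j) 0 * (xu j - x j) := by simp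
        _ ≤ v j * fderiv ℝ g (x + t • v) (Pi.single j 1) i := by
            rw [mul_comm (v j)]; linarith
    have := deriv_bound_aux' (hder i) hb
    simpa [hv] using this
  · -- upper bound
    have hb : ∀ t ∈ Set.Icc (0:ℝ) 1,
        fderiv ℝ g (x + t • v) v i ≤ (mpos Jhi).mulVec (xu - x) i := by
      intro t ht
      rw [hsum]
      unfold Matrix.mulVec dotProduct mpos
      apply Finset.sum_le_sum
      intro j _
      have hJj := (hJ _ (hpath t ht) i j).2
      have h3 : fderiv ℝ g (x + t • v) (Pi.single j 1) i * v j ≤ Jhi i j * v j :=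
        mul_le_mul_of_nonneg_right hJj (hv0 j)
      have h2 : Jhi i j * v j ≤ max (Jhi i j) 0 * v j :=
        mul_le_mul_of_nonneg_right (le_max_left _ _) (hv0 j)
      have h1 : max (Jhi i j) 0 * v j ≤ max (Jhi i j) 0 * (xu j - x j) :=
        mul_le_mul_of_nonneg_left (hvle j) (le_max_right _ _)
      calc v j * fderiv ℝ g (x + t • v) (Pi.single j 1) i
          = fderiv ℝ g (x + t • v) (Pi.single j 1) i * v j := mul_comm _ _
        _ ≤ max (Jhi i j) 0 * (xu - x) j := by simp; linarith
    have := deriv_bound_aux (hder i) hb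
    simpa [hv] using this
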